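/- Let H be a strongly t-saturating weighted graph with weight a_j at each vertex j, and let N be a nonempty subset of the vertex set of H. Then ν(H − N) ≥ t − Σ_{j ∈ N} a_j. -/

import Mathlib

open MvPolynomial
open scoped Classical

noncomputable section

/-! ### Weighted graphs and matchings -/

/-- Number of times the vertex `v` appears in the multiset of edges `M`. -/
def edgeCount {α : Type*} (M : Multiset (Sym2 α)) (v : α) : ℕ :=
  Multiset.countP (fun e => v ∈ e) M

/-- A matching of the weighted graph `(G, w)`: a family of edges of `G` (with repetitions
allowed) such that every vertex appears in these edges no more times than its weight.
Vertices of weight `0` are regarded as not belonging to the weighted graph. -/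
def IsWMatching {α : Type*} (G : SimpleGraph α) (w : α → ℕ) (M : Multiset (Sym2 α)) : Prop :=
  (∀ e ∈ M, e ∈ G.edgeSet) ∧ ∀ v, edgeCount M v ≤ w v

/-- The matching number of the weighted graph `(G, w)`. -/
def nu {α : Type*} (G : SimpleGraph α) (w : α → ℕ) : ℕ :=
  sSup {m | ∃ M : Multiset (Sym2 α), IsWMatching G w M ∧ Multiset.card M = m}

/-- `deg_w(i) = Σ_{j ∈ N_w(i)} w j`, the sum of the weights of the neighbours of `i`. -/
def wdeg {α : Type*} [Fintype α] (G : SimpleGraph α) (w : α → ℕ) (i : α) : ℕ :=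
  ∑ j : α, if G.Adj i j then w j else 0

/-- The weighted graph obtained from `(G, w)` by deleting the (open) neighbourhood of `i`. -/
def delNbr {α : Type*} (G : SimpleGraph α) (w : α → ℕ) (i : α) : α → ℕ :=
  fun j => if G.Adj i j then 0 else w j

/-- The weighted graph obtained from `(G, w)` by deleting the vertices of `N`. -/
def delSet {α : Type*} (w : α → ℕ) (N : Set α) : α → ℕ :=
  fun j => if j ∈ N then 0 else w j

/-- A weighted graph `H = (G, w)` is `t`-saturating if `ν(H) < t` and
`ν(H − N_H(i)) ≥ t − deg_H(i)` for every vertex `i` of `H`. -/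
def TSaturating {α : Type*} [Fintype α] (G : SimpleGraph α) (w : α → ℕ) (t : ℕ) : Prop :=
  nu G w < t ∧ ∀ i, 0 < w i → t ≤ nu G (delNbr G w i) + wdeg G w i

/-- A weighted graph `H = (G, w)` is strongly `t`-saturating if `ν(H) < t` and
`ν(H − j) ≥ t − w j` for every vertex `j` of `H`. -/
def StronglyTSaturating {α : Type*} (G : SimpleGraph α) (w : α → ℕ) (t : ℕ) : Prop :=
  nu G w < t ∧ ∀ j, 0 < w j → t ≤ nu G (delSet w {j}) + w j

/-! ### Covers, cores, neighbourhoods -/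

/-- A (vertex) cover of a graph. -/
def IsVCover {α : Type*} (G : SimpleGraph α) (F : Set α) : Prop :=
  ∀ ⦃i j⦄, G.Adj i j → i ∈ F ∨ j ∈ F

/-- A minimal (vertex) cover of a graph. -/
def IsMinimalVCover {α : Type*} (G : SimpleGraph α) (F : Set α) : Prop :=
  IsVCover G F ∧ ∀ F', IsVCover G F' → F' ⊆ F → F' = F

/-- `core(F)`: the set of vertices of `F` which are not adjacent to any vertex outside `F`. -/
def graphCore {α : Type*} (G : SimpleGraph α) (F : Set α) : Set α :=
  {i | i ∈ F ∧ ∀ j, G.Adj i j → j ∈ F}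

/-- The closed neighbourhood `N[U]` of a set of vertices `U`. -/
def closedNbhd {α : Type*} (G : SimpleGraph α) (U : Set α) : Set α :=
  U ∪ {v | ∃ u ∈ U, G.Adj u v}

/-- `F` is minimal among the covers of `G` containing `S`. -/
def MinimalCoverOver {α : Type*} (G : SimpleGraph α) (S F : Set α) : Prop :=
  IsVCover G F ∧ S ⊆ F ∧ ∀ F', IsVCover G F' → S ⊆ F' → F' ⊆ F → F' = F

/-- `W` is a dominating set: every vertex outside `W` is adjacent to a vertex of `W`. -/
def IsDominating {α : Type*} (G : SimpleGraph α) (W : Set α) : Prop :=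
  ∀ v, v ∉ W → ∃ u ∈ W, G.Adj u v

/-- Every connected component of `H` contains an odd cycle of length at most `L`. -/
def ComponentOddCycleLe {β : Type*} (H : SimpleGraph β) (L : ℕ) : Prop :=
  ∀ c : H.ConnectedComponent, ∃ (v : β) (cyc : H.Walk v v),
    H.connectedComponentMk v = c ∧ cyc.IsCycle ∧ Odd cyc.length ∧ cyc.length ≤ L

/-- Every connected component of `H` contains an odd cycle. -/
def ComponentOddCycle {β : Type*} (H : SimpleGraph β) : Prop :=
  ∀ c : H.ConnectedComponent, ∃ (v : β) (cyc : H.Walk v v),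
    H.connectedComponentMk v = c ∧ cyc.IsCycle ∧ Odd cyc.length

/-! ### Edge ideals -/

/-- The edge ideal of a simple graph. -/
def edgeIdeal (k : Type*) [CommRing k] {σ : Type*} (G : SimpleGraph σ) :
    Ideal (MvPolynomial σ k) :=
  Ideal.span {p | ∃ i j, G.Adj i j ∧ p = X i * X j}

/-- The maximal homogeneous ideal `(x_1, …, x_n)`. -/
def maxIdeal (k : Type*) [CommRing k] (σ : Type*) : Ideal (MvPolynomial σ k) :=
  Ideal.span (Set.range (X : σ → MvPolynomial σ k))

/-- `P_F`, the ideal generated by the variables `x_i`, `i ∈ F`. -/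
def varIdeal (k : Type*) [CommRing k] {σ : Type*} (F : Set σ) : Ideal (MvPolynomial σ k) :=
  Ideal.span ((fun i => (X i : MvPolynomial σ k)) '' F)

/-- The monomial `x^a`. -/
def monom (k : Type*) [CommRing k] {n : ℕ} (a : Fin n → ℕ) : MvPolynomial (Fin n) k :=
  ∏ i : Fin n, (X i : MvPolynomial (Fin n) k) ^ a i

/-- `f` belongs to the saturation `J̃ = ⋃_{m ≥ 1} (J : 𝔪^m)` of `J`. -/
def inSaturation (k : Type*) [CommRing k] {σ : Type*} (J : Ideal (MvPolynomial σ k))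
    (f : MvPolynomial σ k) : Prop :=
  ∃ m : ℕ, f ∈ Submodule.colon J (((maxIdeal k σ) ^ m : Ideal (MvPolynomial σ k)) : Set (MvPolynomial σ k))

/-- `P` is an associated prime of the ideal `J`, i.e. of the module `R ⧸ J`. -/
def assocPrime {R : Type*} [CommRing R] (J P : Ideal R) : Prop :=
  P ∈ associatedPrimes R (R ⧸ J)

/-- `P` is an embedded associated prime of `J`: an associated prime of `R ⧸ J` which is
not a minimal prime of `J`. -/
def embeddedAssocPrime {R : Type*} [CommRing R] (J P : Ideal R) : Prop :=
  assocPrime J P ∧ P ∉ J.minimalPrimes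

/-- The five configurations appearing in the description of `Ass(I³)`: a triangle; a union
of an edge and a triangle meeting at exactly one vertex; a union of two vertex-disjoint
triangles with no edges between them; a union of two triangles meeting at exactly one
vertex; a pentagon. `W` is the vertex set of the subgraph. -/
def Config3 {α : Type*} (G : SimpleGraph α) (W : Set α) : Prop :=
  (∃ u v w : α, u ≠ v ∧ u ≠ w ∧ v ≠ w ∧ G.Adj u v ∧ G.Adj v w ∧ G.Adj u w ∧
    W = {u, v, w}) ∨
  (∃ i j h v : α, [i, j, h, v].Pairwise (· ≠ ·) ∧ G.Adj i j ∧ G.Adj j h ∧ G.Adj i h ∧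
    G.Adj i v ∧ W = {i, j, h, v}) ∨
  (∃ u₁ v₁ w₁ u₂ v₂ w₂ : α, [u₁, v₁, w₁, u₂, v₂, w₂].Pairwise (· ≠ ·) ∧
    G.Adj u₁ v₁ ∧ G.Adj v₁ w₁ ∧ G.Adj u₁ w₁ ∧ G.Adj u₂ v₂ ∧ G.Adj v₂ w₂ ∧ G.Adj u₂ w₂ ∧
    (∀ x ∈ ({u₁, v₁, w₁} : Set α), ∀ y ∈ ({u₂, v₂, w₂} : Set α), ¬ G.Adj x y) ∧
    W = {u₁, v₁, w₁, u₂, v₂, w₂}) ∨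
  (∃ i j h u v : α, [i, j, h, u, v].Pairwise (· ≠ ·) ∧
    G.Adj i j ∧ G.Adj j h ∧ G.Adj i h ∧ G.Adj i u ∧ G.Adj u v ∧ G.Adj i v ∧
    W = {i, j, h, u, v}) ∨
  (∃ p : Fin 5 → α, Function.Injective p ∧ (∀ i : Fin 5, G.Adj (p i) (p (i + 1))) ∧
    W = Set.range p)

end

section Aux

variable {α : Type*} [Fintype α]

lemma card_le_sum_edgeCount (M : Multiset (Sym2 α)) :
    Multiset.card M ≤ ∑ v : α, edgeCount M v := by
  induction M using Multiset.induction_on with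
  | empty => simp [edgeCount]
  | cons e M ih =>
    have he : ∃ a : α, a ∈ e := by
      induction e using Sym2.ind with
      | _ a b => exact ⟨a, Sym2.mem_mk_left a b⟩
    obtain ⟨a, ha⟩ := he
    have h1 : (1 : ℕ) ≤ ∑ v : α, (if v ∈ e then 1 else 0) := by
      calc (1 : ℕ) = if a ∈ e then 1 else 0 := by simp [ha]
        _ ≤ ∑ v : α, (if v ∈ e then 1 else 0) :=
          Finset.single_le_sum (f := fun v : α => if v ∈ e then (1:ℕ) else 0)
            (fun i _ => by positivity) (Finset.mem_univ a)
    simp only [edgeCount, Multiset.countP_cons, Multiset.card_cons,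
      Finset.sum_add_distrib] at *
    omega

lemma matching_bdd (G : SimpleGraph α) (w : α → ℕ) :
    BddAbove {m | ∃ M : Multiset (Sym2 α), IsWMatching G w M ∧ Multiset.card M = m} := by
  refine ⟨∑ v : α, w v, fun m hm => ?_⟩
  obtain ⟨M, ⟨_, hcount⟩, rfl⟩ := hm
  exact le_trans (card_le_sum_edgeCount M) (Finset.sum_le_sum fun v _ => hcount v)

lemma matching_nonempty (G : SimpleGraph α) (w : α → ℕ) :
    {m | ∃ M : Multiset (Sym2 α), IsWMatching G w M ∧ Multiset.card M = m}.Nonempty :=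
  ⟨0, 0, ⟨fun e he => absurd he (Multiset.notMem_zero e),
    fun v => by simp [edgeCount]⟩, rfl⟩

lemma nu_le_del_add (G : SimpleGraph α) (w : α → ℕ) (j : α) :
    nu G w ≤ nu G (delSet w {j}) + w j := by
  have hmem := Nat.sSup_mem (matching_nonempty G w) (matching_bdd G w)
  obtain ⟨M, ⟨hE, hC⟩, hcard⟩ := hmem
  set M' : Multiset (Sym2 α) := Multiset.filter (fun e => ¬ j ∈ e) M with hM'
  have hE' : ∀ e ∈ M', e ∈ G.edgeSet := fun e he =>
    hE e (Multiset.mem_of_mem_filter he)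
  have hcount' : ∀ v, edgeCount M' v ≤ edgeCount M v := fun v =>
    Multiset.countP_le_of_le _ (Multiset.filter_le _ M)
  have hCj : edgeCount M' j = 0 := by
    simp only [edgeCount, Multiset.countP_eq_zero, hM']
    intro e he
    exact (Multiset.mem_filter.mp he).2
  have hmatch' : IsWMatching G (delSet w {j}) M' := by
    refine ⟨hE', fun v => ?_⟩
    by_cases hv : v = j
    · subst hv; simp [delSet, hCj]
    · simpa [delSet, hv] using (hcount' v).trans (hC v)
  have hcard' : Multiset.card M ≤ Multiset.card M' + w j := by
    have hsplit := congrArg Multiset.card (Multiset.filter_add_not (fun e => ¬ j ∈ e) M)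
    rw [Multiset.card_add] at hsplit
    have hle : Multiset.card (Multiset.filter (fun e => ¬¬ j ∈ e) M) ≤ w j := by
      refine le_trans ?_ (hC j)
      simp only [edgeCount]
      rw [← Multiset.countP_eq_card_filter]
      exact Multiset.countP_le_of_le _ le_rfl |>.trans
        (le_of_eq (Multiset.countP_congr rfl (fun e _ => by simp)))
    have hMd : Multiset.card M' = Multiset.card (Multiset.filter (fun e => j ∉ e) M) := rfl
    omega
  have hle' : Multiset.card M' ≤ nu G (delSet w {j}) :=
    le_csSup (matching_bdd G (delSet w {j})) ⟨M', hmatch', rfl⟩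
  calc nu G w = Multiset.card M := hcard.symm
    _ ≤ Multiset.card M' + w j := hcard'
    _ ≤ nu G (delSet w {j}) + w j := by omega

lemma delSet_insert (w : α → ℕ) (j : α) (N : Finset α) :
    delSet w ↑(insert j N) = delSet (delSet w ↑N) {j} := by
  funext v
  simp only [delSet, Finset.coe_insert, Set.mem_insert_iff, Set.mem_singleton_iff,
    Finset.mem_coe]
  by_cases h1 : v = j <;> by_cases h2 : v ∈ N <;> simp [h1, h2]

end Aux

theorem stmt9 {α : Type*} [Fintype α] (G : SimpleGraph α) (w : α → ℕ) (t : ℕ)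
    (hw : ∀ i, 0 < w i) (hsat : StronglyTSaturating G w t)
    (N : Finset α) (hN : N.Nonempty) :
    t ≤ nu G (delSet w ↑N) + ∑ j ∈ N, w j := by
  induction hN using Finset.Nonempty.cons_induction with
  | singleton j =>
    have := hsat.2 j (hw j)
    simpa using this
  | cons j s hj hs ih =>
    have h1 : nu G (delSet w ↑s) ≤ nu G (delSet (delSet w ↑s) {j}) + delSet w ↑s j :=
      nu_le_del_add G (delSet w ↑s) j
    have h2 : delSet w ↑s j = w j := by simp [delSet, hj]
    have h3 : delSet w ↑(insert j s) = delSet (delSet w ↑s) {j} := delSet_insert w j s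
    have h4 : (Finset.cons j s hj : Finset α) = insert j s := by
      simp [Finset.insert_eq_self]
    rw [h4, h3, Finset.sum_insert hj]
    omega
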